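/- Let G be an n×n positive definite real matrix, c ∈ ℝⁿ a nonzero vector, and U an n×(n−1) matrix whose columns form an orthonormal basis of the orthogonal complement of c. Then det(Uᵀ G U) = det(G) · (cᵀ G⁻¹ c) / (cᵀ c). -/

import Mathlib

open Matrix

/-- Determinant of the restriction of a positive definite quadratic form to the
hyperplane orthogonal to `c`: `det(UᵀGU) = det(G)·(cᵀG⁻¹c)/(cᵀc)` when the
columns of `U` form an orthonormal basis of `c^⊥`. -/
theorem restricted_gram_determinant (n : ℕ)
    (G : Matrix (Fin n) (Fin n) ℝ) (hG : G.PosDef)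
    (c : Fin n → ℝ) (hc : c ≠ 0)
    (U : Matrix (Fin n) (Fin (n - 1)) ℝ)
    (hUU : Uᵀ * U = 1)
    (hcU : Matrix.vecMul c U = 0) :
    (Uᵀ * G * U).det = G.det * (c ⬝ᵥ (G⁻¹ *ᵥ c)) / (c ⬝ᵥ c) := by
  have hn : n - 1 + 1 = n := by
    rcases Nat.eq_zero_or_pos n with h | h
    · subst h; exact absurd (funext fun i => i.elim0) hc
    · omega
  set κ := c ⬝ᵥ c with hκdef
  have hκ : 0 < κ := by
    have h1 := (Matrix.PosDef.one (n := Fin n) (R := ℝ)).dotProduct_mulVec_pos hc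
    simpa using h1
  set C : Matrix (Fin n) (Fin 1) ℝ := Matrix.replicateCol (Fin 1) c with hCdef
  have hUtC : Uᵀ * C = 0 := by
    ext j k
    have := congrFun hcU j
    simpa [hCdef, mul_apply, vecMul, dotProduct, mul_comm] using this
  have hCtU : Cᵀ * U = 0 := by
    ext k j
    have := congrFun hcU j
    simpa [hCdef, mul_apply, vecMul, dotProduct, mul_comm] using this
  have hCtC : Cᵀ * C = κ • (1 : Matrix (Fin 1) (Fin 1) ℝ) := by
    ext i j
    fin_cases i; fin_cases j
    simp [hCdef, hκdef, mul_apply, dotProduct]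
  have hCMC : ∀ M : Matrix (Fin n) (Fin n) ℝ, (Cᵀ * M * C) 0 0 = c ⬝ᵥ (M *ᵥ c) := by
    intro M
    simp only [mul_apply, dotProduct, mulVec, transpose_apply, hCdef, replicateCol_apply,
      Finset.sum_mul, Finset.mul_sum]
    rw [Finset.sum_comm]
    exact Finset.sum_congr rfl fun i _ => Finset.sum_congr rfl fun j _ => by ring
  set Q : Matrix (Fin n) (Fin (n-1) ⊕ Fin 1) ℝ := fromCols U C with hQdef
  set L : Matrix (Fin (n-1) ⊕ Fin 1) (Fin n) ℝ := fromRows Uᵀ (κ⁻¹ • Cᵀ) with hLdef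
  have hLQ : L * Q = 1 := by
    rw [hLdef, hQdef, fromRows_mul_fromCols, hUU, hUtC, Matrix.smul_mul, Matrix.smul_mul,
      hCtU, hCtC, smul_zero, smul_smul, inv_mul_cancel₀ hκ.ne', one_smul, ← fromBlocks_one]
  have e : Fin n ≃ Fin (n-1) ⊕ Fin 1 := (finCongr hn.symm).trans finSumFinEquiv.symm
  have hQL : Q * L = 1 := (fromCols_mul_fromRows_eq_one_comm e U C _ _).mpr hLQ
  have hA : Qᵀ * G * Q = fromBlocks (Uᵀ*G*U) (Uᵀ*G*C) (Cᵀ*G*U) (Cᵀ*G*C) := by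
    rw [hQdef, transpose_fromCols, fromRows_mul, fromRows_mul_fromCols]
  have hK : Qᵀ * Q = fromBlocks 1 0 0 (κ • (1 : Matrix (Fin 1) (Fin 1) ℝ)) := by
    rw [hQdef, transpose_fromCols, fromRows_mul_fromCols, hUU, hUtC, hCtU, hCtC]
  -- determinant of Qᵀ M Q via square reindexing
  set S : Matrix (Fin n) (Fin n) ℝ := Q.submatrix id ⇑e with hSdef
  have hS : ∀ M : Matrix (Fin n) (Fin n) ℝ, Sᵀ * M * S = (Qᵀ * M * Q).submatrix ⇑e ⇑e := by
    intro M
    have h1 : Sᵀ * M = (Qᵀ * M).submatrix ⇑e id := by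
      have := submatrix_mul_equiv Qᵀ M ⇑e (Equiv.refl (Fin n)) id
      simpa [hSdef, transpose_submatrix] using this
    have h2 : (Qᵀ*M).submatrix ⇑e id * S = (Qᵀ*M*Q).submatrix ⇑e ⇑e := by
      have := submatrix_mul_equiv (Qᵀ*M) Q ⇑e (Equiv.refl (Fin n)) ⇑e
      simpa [hSdef] using this
    rw [h1, h2]
  have hdetSS : S.det * S.det = κ := by
    have h1 := hS (1 : Matrix (Fin n) (Fin n) ℝ)
    rw [Matrix.mul_one, Matrix.mul_one] at h1
    have h2 : (Sᵀ * S).det = (Qᵀ * Q).det := by rw [h1, det_submatrix_equiv_self]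
    rw [det_mul, det_transpose] at h2
    rw [h2, hK, det_fromBlocks_zero₂₁, det_one, one_mul, det_fin_one]
    simp
  have hdetA : (Qᵀ * G * Q).det = κ * G.det := by
    have h1 : (Sᵀ * G * S).det = (Qᵀ * G * Q).det := by rw [hS G, det_submatrix_equiv_self]
    rw [det_mul, det_mul, det_transpose] at h1
    rw [← h1, ← hdetSS]; ring
  -- positive definiteness of the restricted form
  have hA11 : (Uᵀ*G*U).PosDef := by
    refine Matrix.PosDef.of_dotProduct_mulVec_pos ?_ fun ⦃x⦄ hx => ?_
    · have h := Matrix.isHermitian_conjTranspose_mul_mul U hG.1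
      simpa [conjTranspose_eq_transpose_of_trivial] using h
    · have hUx : U *ᵥ x ≠ 0 := by
        intro h
        apply hx
        have h2 := congrArg (fun v => Uᵀ *ᵥ v) h
        simpa [mulVec_mulVec, hUU] using h2
      have h := hG.dotProduct_mulVec_pos hUx
      simp only [star_trivial] at h ⊢
      rwa [← mulVec_mulVec, ← mulVec_mulVec, dotProduct_mulVec x Uᵀ, vecMul_transpose]
  haveI i11 : Invertible (Uᵀ*G*U) := invertibleOfIsUnitDet _ hA11.det_pos.ne'.isUnit
  have hGdet : IsUnit G.det := hG.det_pos.ne'.isUnit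
  have hdet2 : (Qᵀ*G*Q).det = (Uᵀ*G*U).det *
      (Cᵀ*G*C - Cᵀ*G*U * ⅟(Uᵀ*G*U) * (Uᵀ*G*C)).det := by
    rw [hA, det_fromBlocks₁₁]
  have hABone : (Qᵀ*G*Q) * (L*G⁻¹*Lᵀ) = 1 := by
    rw [show (Qᵀ*G*Q) * (L*G⁻¹*Lᵀ) = Qᵀ*G*(Q*L)*G⁻¹*Lᵀ by
      simp only [Matrix.mul_assoc]]
    rw [hQL, Matrix.mul_one, Matrix.mul_assoc Qᵀ G G⁻¹, Matrix.mul_nonsing_inv G hGdet,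
      Matrix.mul_one, ← transpose_mul, hLQ, transpose_one]
  haveI iA : Invertible (Qᵀ*G*Q) := invertibleOfRightInverse _ _ hABone
  have hAinv : (Qᵀ*G*Q)⁻¹ = L*G⁻¹*Lᵀ := Matrix.inv_eq_right_inv hABone
  haveI iFB : Invertible (fromBlocks (Uᵀ*G*U) (Uᵀ*G*C) (Cᵀ*G*U) (Cᵀ*G*C)) := hA ▸ iA
  haveI is : Invertible (Cᵀ*G*C - Cᵀ*G*U * ⅟(Uᵀ*G*U) * (Uᵀ*G*C)) :=
    Matrix.invertibleOfFromBlocks₁₁Invertible (Uᵀ*G*U) (Uᵀ*G*C) (Cᵀ*G*U) (Cᵀ*G*C)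
  have h22 : (Qᵀ*G*Q)⁻¹ (Sum.inr 0) (Sum.inr 0) =
      (⅟(Cᵀ*G*C - Cᵀ*G*U * ⅟(Uᵀ*G*U) * (Uᵀ*G*C))) 0 0 := by
    rw [hA, ← invOf_eq_nonsing_inv, invOf_fromBlocks₁₁_eq, fromBlocks_apply₂₂]
  set γ := c ⬝ᵥ G⁻¹ *ᵥ c with hγdef
  have hγ : 0 < γ := by
    have h := hG.inv.dotProduct_mulVec_pos hc
    simpa using h
  have hLGL : (L*G⁻¹*Lᵀ) (Sum.inr 0) (Sum.inr 0) = κ⁻¹ * (κ⁻¹ * γ) := by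
    rw [hLdef, transpose_fromRows, transpose_smul, transpose_transpose, transpose_transpose,
      fromRows_mul, fromRows_mul_fromCols, fromBlocks_apply₂₂,
      Matrix.smul_mul, Matrix.smul_mul, Matrix.mul_smul]
    simp only [Matrix.smul_apply, smul_eq_mul]
    rw [hCMC G⁻¹]
  have hEq : (κ⁻¹ * (κ⁻¹ * γ)) *
      (Cᵀ*G*C - Cᵀ*G*U * ⅟(Uᵀ*G*U) * (Uᵀ*G*C)) 0 0 = 1 := by
    have h := invOf_mul_self (Cᵀ*G*C - Cᵀ*G*U * ⅟(Uᵀ*G*U) * (Uᵀ*G*C))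
    have h2 := congrFun (congrFun h 0) 0
    rw [mul_apply] at h2
    simp only [Fin.sum_univ_one, one_apply_eq] at h2
    rw [← h22, hAinv, hLGL] at h2
    exact h2
  -- final arithmetic
  have hdetfin : (Cᵀ*G*C - Cᵀ*G*U * ⅟(Uᵀ*G*U) * (Uᵀ*G*C)).det =
      (Cᵀ*G*C - Cᵀ*G*U * ⅟(Uᵀ*G*U) * (Uᵀ*G*C)) 0 0 := det_fin_one _
  set d := (Uᵀ*G*U).det with hddef
  set t := (Cᵀ*G*C - Cᵀ*G*U * ⅟(Uᵀ*G*U) * (Uᵀ*G*C)) 0 0 with htdef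
  have h1 : κ * G.det = d * t := by rw [← hdetA, hdet2, hdetfin]
  have hEq' : γ * t = κ * κ := by
    have h := congrArg (fun r => κ * κ * r) hEq
    simp only [mul_one] at h
    field_simp at h
    linarith [h]
  rw [eq_div_iff hκ.ne']
  have h3 : γ * (κ * G.det) = d * (γ * t) := by rw [h1]; ring
  rw [hEq'] at h3
  have h4 : κ * (d * κ) = κ * (G.det * γ) := by linear_combination -h3
  exact mul_left_cancel₀ hκ.ne' h4
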